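/- arXiv:2206.11483 — 5 statements merged into one kernel-verified Lean document; each statement's English description precedes it below -/
import Mathlib

section
/- Let R *_τ^σ G be a crossed product of a finite group G over a simple ring R with action σ and twisting τ. If for every nontrivial g ∈ G the automorphism σ_g of R is not inner, then R *_τ^σ G is a simple ring and its center equals Z(R)^G, the fixed subring of the center of R under the action of G. -/
open scoped BigOperators

/-- If `R` is simple, `φ` is a non-inner automorphism and `φ r * c = c * r` for all `r`,
then `c = 0`. -/
private lemma key_outer {R : Type*} [Ring R] [IsSimpleRing R]
    (φ : R ≃+* R) (hφ : ¬ ∃ u : Rˣ, ∀ r : R, φ r = (u⁻¹ : Rˣ) * r * u)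
    (c : R) (hc : ∀ r : R, φ r * c = c * r) : c = 0 := by
  by_contra hc0
  have hc' : ∀ r : R, r * c = c * φ.symm r := fun r => by
    simpa [RingEquiv.apply_symm_apply] using hc (φ.symm r)
  obtain ⟨J1, hJ1⟩ : ∃ J : TwoSidedIdeal R, ∀ x : R, x ∈ J ↔ ∃ d, x = c * d :=
    ⟨TwoSidedIdeal.mk' {x | ∃ d, x = c * d}
      ⟨0, (mul_zero c).symm⟩
      (fun ⟨d1, h1⟩ ⟨d2, h2⟩ => ⟨d1 + d2, by rw [h1, h2, mul_add]⟩)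
      (fun ⟨d, h⟩ => ⟨-d, by rw [h, mul_neg]⟩)
      (fun {x y} ⟨d, h⟩ => ⟨φ.symm x * d, by rw [h, ← mul_assoc, hc' x, mul_assoc]⟩)
      (fun {x y} ⟨d, h⟩ => ⟨d * y, by rw [h, mul_assoc]⟩),
      fun x => TwoSidedIdeal.mem_mk' _ _ _ _ _ _ x⟩
  obtain ⟨d, hd⟩ : ∃ d, (1 : R) = c * d :=
    (hJ1 1).mp (IsSimpleRing.one_mem_of_ne_zero_mem J1 hc0 ((hJ1 c).mpr ⟨1, (mul_one c).symm⟩))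
  obtain ⟨J2, hJ2⟩ : ∃ J : TwoSidedIdeal R, ∀ x : R, x ∈ J ↔ ∃ e, x = e * c :=
    ⟨TwoSidedIdeal.mk' {x | ∃ e, x = e * c}
      ⟨0, (zero_mul c).symm⟩
      (fun ⟨e1, h1⟩ ⟨e2, h2⟩ => ⟨e1 + e2, by rw [h1, h2, add_mul]⟩)
      (fun ⟨e, h⟩ => ⟨-e, by rw [h, neg_mul]⟩)
      (fun {x y} ⟨e, h⟩ => ⟨x * e, by rw [h, mul_assoc]⟩)
      (fun {x y} ⟨e, h⟩ => ⟨e * φ y, by rw [h, mul_assoc, ← hc y, ← mul_assoc]⟩),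
      fun x => TwoSidedIdeal.mem_mk' _ _ _ _ _ _ x⟩
  obtain ⟨e, he⟩ : ∃ e, (1 : R) = e * c :=
    (hJ2 1).mp (IsSimpleRing.one_mem_of_ne_zero_mem J2 hc0 ((hJ2 c).mpr ⟨1, (one_mul c).symm⟩))
  have hed : e = d := by
    calc e = e * (c * d) := by rw [← hd, mul_one]
    _ = (e * c) * d := by rw [mul_assoc]
    _ = d := by rw [← he, one_mul]
  have hdc : d * c = 1 := by rw [← hed, ← he]
  refine hφ ⟨(⟨c, d, hd.symm, hdc⟩ : Rˣ)⁻¹, fun r => ?_⟩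
  rw [inv_inv]
  show φ r = c * r * d
  rw [← hc r, mul_assoc, ← hd, mul_one]

/-- A crossed product `R *_τ^σ G`: a ring `A` containing `R` via `ι`, with basis units
`z g` (`g ∈ G`) satisfying `z g * z h = z (g h) * τ(g,h)` and `r * z g = z g * σ_g(r)`,
such that `A` is free as a right `R`-module on the `z g`.  If `R` is simple and `σ_g` is
not inner for every `1 ≠ g ∈ G`, then `A` is simple and its center equals `Z(R)^G`. -/
theorem stmt2 {R A : Type*} [Ring R] [Ring A] {G : Type*} [Group G] [Finite G] [Fintype G]
    (ι : R →+* A) (hι : Function.Injective ι)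
    (σ : G → R ≃+* R) (τ : G → G → Rˣ) (z : G → Aˣ)
    (hcocycle : ∀ g h x : G,
      (τ (g * h) x : R) * σ x (τ g h) = (τ g (h * x) : R) * τ h x)
    (hmul : ∀ g h : G, (z g : A) * z h = (z (g * h) : A) * ι (τ g h))
    (hcomm : ∀ (r : R) (g : G), ι r * z g = (z g : A) * ι (σ g r))
    (hspan : ∀ a : A, ∃ c : G → R, a = ∑ g : G, (z g : A) * ι (c g))
    (hindep : ∀ c : G → R, ∑ g : G, (z g : A) * ι (c g) = 0 → c = 0)
    (hRsimple : IsSimpleRing R)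
    (hnotinner : ∀ g : G, g ≠ 1 → ¬ ∃ u : Rˣ, ∀ r : R, σ g r = (u⁻¹ : Rˣ) * r * u) :
    IsSimpleRing A ∧
      (Subring.center A : Set A) =
        ι '' {r : R | r ∈ Subring.center R ∧ ∀ g : G, σ g r = r} := by
  classical
  haveI := hRsimple
  set t : Rˣ := τ 1 1 with ht
  -- basic expansion lemmas
  have hL : ∀ (r : R) (c : G → R),
      ι r * (∑ g : G, (z g : A) * ι (c g)) = ∑ g : G, (z g : A) * ι (σ g r * c g) := by
    intro r c
    rw [Finset.mul_sum]
    refine Finset.sum_congr rfl fun g _ => ?_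
    rw [← mul_assoc, hcomm r g, map_mul, mul_assoc]
  have hRr : ∀ (r : R) (c : G → R),
      (∑ g : G, (z g : A) * ι (c g)) * ι r = ∑ g : G, (z g : A) * ι (c g * r) := by
    intro r c
    rw [Finset.sum_mul]
    refine Finset.sum_congr rfl fun g _ => ?_
    rw [map_mul, mul_assoc]
  have huniq : ∀ c d : G → R,
      ∑ g : G, (z g : A) * ι (c g) = ∑ g : G, (z g : A) * ι (d g) → c = d := by
    intro c d h
    have h0 : ∑ g : G, (z g : A) * ι ((c - d) g) = 0 := by
      simp only [Pi.sub_apply, map_sub, mul_sub]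
      rw [Finset.sum_sub_distrib, h, sub_self]
    exact sub_eq_zero.mp (hindep _ h0)
  have hz1 : (z 1 : A) = ι (t : R) := by
    have h := hmul 1 1
    rw [mul_one] at h
    exact ((z 1).mul_right_inj).mp h
  have hσ1 : ∀ r : R, σ 1 r = (↑t⁻¹ : R) * r * ↑t := by
    intro r
    have h := hcomm r 1
    rw [hz1, ← map_mul, ← map_mul] at h
    have h2 := hι h
    have h3 : (↑t⁻¹ : R) * (r * ↑t) = σ 1 r := by
      rw [h2, ← mul_assoc, Units.inv_mul, one_mul]
    rw [← h3, mul_assoc]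
  -- part 1: simplicity
  have hsimpleA : IsSimpleRing A := by
    haveI hA : Nontrivial A :=
      ⟨1, 0, fun h => one_ne_zero (α := R) (hι (by rw [map_one, map_zero]; exact h))⟩
    refine IsSimpleRing.of_eq_bot_or_eq_top fun I => ?_
    rw [or_iff_not_imp_left]
    intro hIbot
    rw [← TwoSidedIdeal.one_mem_iff]
    obtain ⟨a, haI, ha0⟩ : ∃ a, a ∈ I ∧ a ≠ 0 := by
      by_contra h
      push_neg at h
      refine hIbot (eq_bot_iff.mpr fun x hx => ?_)
      rw [TwoSidedIdeal.mem_bot]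
      exact h x hx
    obtain ⟨c, hc⟩ := hspan a
    have hc0 : c ≠ 0 := by
      intro h
      apply ha0
      rw [hc, h]
      simp
    have hex : ∃ n, ∃ c : G → R, c ≠ 0 ∧ (∑ g : G, (z g : A) * ι (c g)) ∈ I ∧
        (Finset.univ.filter fun g => c g ≠ 0).card = n := ⟨_, c, hc0, hc ▸ haI, rfl⟩
    set n := Nat.find hex with hn
    obtain ⟨c1, hc1ne, hc1I, hc1card⟩ := Nat.find_spec hex
    have hmin : ∀ d : G → R, d ≠ 0 → (∑ g : G, (z g : A) * ι (d g)) ∈ I →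
        n ≤ (Finset.univ.filter fun g => d g ≠ 0).card :=
      fun d h1 h2 => Nat.find_min' hex ⟨d, h1, h2, rfl⟩
    obtain ⟨g0, hg0⟩ : ∃ g0, c1 g0 ≠ 0 := by
      by_contra h
      push_neg at h
      exact hc1ne (funext h)
    set c2 : G → R := fun h => ↑(τ g0⁻¹ (g0 * h)) * c1 (g0 * h) with hc2
    have hb : (∑ g : G, (z g : A) * ι (c2 g)) ∈ I := by
      have heq : (∑ g : G, (z g : A) * ι (c2 g))
          = (z g0⁻¹ : A) * ∑ g : G, (z g : A) * ι (c1 g) := by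
        rw [Finset.mul_sum]
        refine Fintype.sum_equiv (Equiv.mulLeft g0) _ _ fun h => ?_
        show (z h : A) * ι (c2 h) = (z g0⁻¹ : A) * ((z (g0 * h) : A) * ι (c1 (g0 * h)))
        rw [← mul_assoc, hmul, inv_mul_cancel_left, mul_assoc, ← map_mul]
      rw [heq]
      exact I.mul_mem_left _ _ hc1I
    have hc2supp : ∀ h : G, c2 h ≠ 0 ↔ c1 (g0 * h) ≠ 0 := fun h =>
      not_congr (τ g0⁻¹ (g0 * h)).mul_right_eq_zero
    have hc2card : (Finset.univ.filter fun g => c2 g ≠ 0).card = n := by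
      have heq : (Finset.univ.filter fun g => c2 g ≠ 0)
          = (Finset.univ.filter fun g => c1 g ≠ 0).image (fun g => g0⁻¹ * g) := by
        ext h
        simp only [Finset.mem_filter, Finset.mem_image, Finset.mem_univ, true_and]
        constructor
        · intro hh
          exact ⟨g0 * h, (hc2supp h).mp hh, by rw [inv_mul_cancel_left]⟩
        · rintro ⟨g, hg, rfl⟩
          rw [hc2supp, mul_inv_cancel_left]
          exact hg
      rw [heq, Finset.card_image_of_injective _ (mul_right_injective g0⁻¹), hc1card]
    have hc21 : c2 1 ≠ 0 := (hc2supp 1).mpr (by rwa [mul_one])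
    -- the ideal of "values at 1"
    obtain ⟨J, hJmem⟩ : ∃ J : TwoSidedIdeal R, ∀ x : R, x ∈ J ↔
        ∃ d : G → R, (∑ g : G, (z g : A) * ι (d g)) ∈ I ∧
          (∀ g : G, c2 g = 0 → d g = 0) ∧ (↑t * d 1 = x) := by
      have httσ : ∀ x : R, (↑t : R) * σ 1 x = x * ↑t := fun x => by
        rw [hσ1, ← mul_assoc, ← mul_assoc, Units.mul_inv, one_mul]
      refine ⟨TwoSidedIdeal.mk'
        {x : R | ∃ d : G → R, (∑ g : G, (z g : A) * ι (d g)) ∈ I ∧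
          (∀ g : G, c2 g = 0 → d g = 0) ∧ (↑t * d 1 = x)}
        ⟨0, by simp, fun g _ => rfl, mul_zero _⟩
        (fun {x y} ⟨d1, h1I, h1s, h1v⟩ ⟨d2, h2I, h2s, h2v⟩ =>
          ⟨d1 + d2, by
              simp only [Pi.add_apply, map_add, mul_add, Finset.sum_add_distrib]
              exact I.add_mem h1I h2I,
            fun g hg => by rw [Pi.add_apply, h1s g hg, h2s g hg, add_zero],
            by rw [Pi.add_apply, mul_add, h1v, h2v]⟩)
        (fun {x} ⟨d, hI', hs, hv⟩ =>
          ⟨-d, by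
              simp only [Pi.neg_apply, map_neg, mul_neg, Finset.sum_neg_distrib]
              exact I.neg_mem hI',
            fun g hg => by rw [Pi.neg_apply, hs g hg, neg_zero],
            by rw [Pi.neg_apply, mul_neg, hv]⟩)
        (fun {x y} ⟨d, hI', hs, hv⟩ =>
          ⟨fun g => σ g x * d g, by rw [← hL]; exact I.mul_mem_left _ _ hI',
            fun g hg => by show σ g x * d g = 0; rw [hs g hg, mul_zero],
            by show (↑t : R) * (σ 1 x * d 1) = x * y
               rw [← mul_assoc, httσ x, mul_assoc, hv]⟩)
        (fun {x y} ⟨d, hI', hs, hv⟩ =>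
          ⟨fun g => d g * y, by rw [← hRr]; exact I.mul_mem_right _ _ hI',
            fun g hg => by show d g * y = 0; rw [hs g hg, zero_mul],
            by show (↑t : R) * (d 1 * y) = x * y
               rw [← mul_assoc, hv]⟩),
        fun x => TwoSidedIdeal.mem_mk' _ _ _ _ _ _ x⟩
    have htc2 : (↑t : R) * c2 1 ≠ 0 := fun h => hc21 (t.mul_right_eq_zero.mp h)
    have h1J : (1 : R) ∈ J :=
      IsSimpleRing.one_mem_of_ne_zero_mem J htc2 ((hJmem _).mpr ⟨c2, hb, fun _ h => h, rfl⟩)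
    obtain ⟨d, hdI, hds, hdv⟩ := (hJmem 1).mp h1J
    have hd1 : d 1 = (↑t⁻¹ : R) := by
      calc d 1 = (↑t⁻¹ : R) * (↑t * d 1) := by rw [← mul_assoc, Units.inv_mul, one_mul]
      _ = ↑t⁻¹ := by rw [hdv, mul_one]
    have hd1ne : d 1 ≠ 0 := by
      rw [hd1]
      intro h
      have h2 := t.mul_inv
      rw [h, mul_zero] at h2
      exact one_ne_zero (α := R) h2.symm
    have hdcard : (Finset.univ.filter fun g => d g ≠ 0).card ≤ n := by
      rw [← hc2card]
      refine Finset.card_le_card fun g hg => ?_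
      simp only [Finset.mem_filter, Finset.mem_univ, true_and] at *
      exact fun h0 => hg (hds g h0)
    have hdcomm : ∀ (r : R) (g : G), σ g r * d g = d g * r := by
      intro r
      set e : G → R := fun g => σ g r * d g - d g * r with he
      have heI : (∑ g : G, (z g : A) * ι (e g)) ∈ I := by
        have heq : (∑ g : G, (z g : A) * ι (e g))
            = ι r * (∑ g : G, (z g : A) * ι (d g))
              - (∑ g : G, (z g : A) * ι (d g)) * ι r := by
          rw [hL, hRr, ← Finset.sum_sub_distrib]
          refine Finset.sum_congr rfl fun g _ => ?_
          rw [he]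
          simp only [map_sub, mul_sub]
        rw [heq]
        exact I.sub_mem (I.mul_mem_left _ _ hdI) (I.mul_mem_right _ _ hdI)
      have he1 : e 1 = 0 := by
        show σ 1 r * d 1 - d 1 * r = 0
        rw [hd1, hσ1, mul_assoc, Units.mul_inv, mul_one, sub_self]
      have hez : e = 0 := by
        by_contra hee
        have h1 := hmin e hee heI
        have h2 : (Finset.univ.filter fun g => e g ≠ 0)
            ⊆ (Finset.univ.filter fun g => d g ≠ 0).erase 1 := by
          intro g hg
          simp only [Finset.mem_filter, Finset.mem_univ, true_and, Finset.mem_erase] at *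
          refine ⟨fun hg1 => hg (hg1 ▸ he1), fun hd0 => hg ?_⟩
          show σ g r * d g - d g * r = 0
          rw [hd0, mul_zero, zero_mul, sub_zero]
        have h3 := Finset.card_le_card h2
        have h4 : ((Finset.univ.filter fun g => d g ≠ 0).erase 1).card
            = (Finset.univ.filter fun g => d g ≠ 0).card - 1 :=
          Finset.card_erase_of_mem (by simp [hd1ne])
        have h5 : 1 ≤ (Finset.univ.filter fun g => d g ≠ 0).card :=
          Finset.card_pos.mpr ⟨1, by simp [hd1ne]⟩
        omega
      intro g
      have h6 : e g = 0 := by rw [hez]; rfl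
      have h7 : σ g r * d g - d g * r = 0 := h6
      exact sub_eq_zero.mp h7
    have hdg : ∀ g : G, g ≠ 1 → d g = 0 := fun g hg =>
      key_outer (σ g) (hnotinner g hg) (d g) (fun r => hdcomm r g)
    have hB : (∑ g : G, (z g : A) * ι (d g)) = 1 := by
      rw [Finset.sum_eq_single 1 (fun g _ hg => by rw [hdg g hg, map_zero, mul_zero])
        (fun h => absurd (Finset.mem_univ 1) h)]
      rw [hd1, hz1, ← map_mul, Units.mul_inv, map_one]
    rw [← hB]
    exact hdI
  refine ⟨hsimpleA, ?_⟩
  -- part 2: center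
  ext a
  simp only [SetLike.mem_coe, Set.mem_image, Set.mem_setOf_eq, Subring.mem_center_iff]
  constructor
  · intro hcen
    obtain ⟨c, hc⟩ := hspan a
    have hrc : ∀ (r : R) (g : G), σ g r * c g = c g * r := by
      intro r
      have h1 : ι r * a = a * ι r := hcen (ι r)
      rw [hc, hL, hRr] at h1
      exact fun g => congrFun (huniq _ _ h1) g
    have hcg0 : ∀ g : G, g ≠ 1 → c g = 0 := fun g hg =>
      key_outer (σ g) (hnotinner g hg) (c g) (fun r => hrc r g)
    have ha : a = ι (↑t * c 1) := by
      rw [hc, Finset.sum_eq_single 1 (fun g _ hg => by rw [hcg0 g hg, map_zero, mul_zero])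
        (fun h => absurd (Finset.mem_univ 1) h), hz1, ← map_mul]
    refine ⟨↑t * c 1, ⟨?_, ?_⟩, ha.symm⟩
    · intro r
      have h1 := hrc r 1
      rw [hσ1] at h1
      have h2 : (↑t : R) * ((↑t⁻¹ * r * ↑t) * c 1) = ↑t * (c 1 * r) := by rw [h1]
      calc r * (↑t * c 1)
          = ((↑t * ↑t⁻¹) * r) * (↑t * c 1) := by rw [Units.mul_inv, one_mul]
        _ = ↑t * ((↑t⁻¹ * r * ↑t) * c 1) := by simp only [mul_assoc]
        _ = ↑t * (c 1 * r) := h2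
        _ = (↑t * c 1) * r := by rw [← mul_assoc]
    · intro g
      have h1 := hcen (z g : A)
      rw [ha, hcomm] at h1
      exact (hι ((z g).mul_right_inj.mp h1)).symm
  · rintro ⟨r0, ⟨hr0c, hr0i⟩, rfl⟩
    intro b
    obtain ⟨c, hcb⟩ := hspan b
    rw [hcb, hRr, hL]
    refine Finset.sum_congr rfl fun g _ => ?_
    rw [hr0i g, hr0c (c g)]
end

section
/- Let A be a central simple algebra over a field F and B = M_k(F) a central F-subalgebra of A (k×k matrices over F embedded in A). Then A is isomorphic as an F-algebra to M_k(Cen_A(B)), the k×k matrix algebra over the centralizer of B in A. -/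
/-- If `A` is a finite-dimensional central simple algebra over a field `F` and
`B ≅ M_k(F)` is an `F`-subalgebra of `A`, then `A ≅ M_k(Cen_A(B))`. -/
theorem stmt3 (F : Type*) [Field F] (A : Type*) [Ring A] [Algebra F A]
    [FiniteDimensional F A] [Algebra.IsCentral F A] [IsSimpleRing A]
    (k : ℕ) (hk : 0 < k) (B : Subalgebra F A)
    (hB : Nonempty (B ≃ₐ[F] Matrix (Fin k) (Fin k) F)) :
    Nonempty (A ≃ₐ[F] Matrix (Fin k) (Fin k) (Subalgebra.centralizer F (B : Set A))) := by
  classical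
  obtain ⟨φ⟩ := hB
  set C := Subalgebra.centralizer F (B : Set A) with hC
  let ψ : Matrix (Fin k) (Fin k) F →ₐ[F] B := φ.symm.toAlgHom
  -- matrix units in A
  let e : Fin k → Fin k → A := fun i j => (ψ (Matrix.single i j 1) : A)
  have heB : ∀ i j, e i j ∈ B := fun i j => (ψ (Matrix.single i j 1)).2
  have hee : ∀ i j l m, e i j * e l m = if j = l then e i m else 0 := by
    intro i j l m
    show ((ψ _ : B) : A) * ((ψ _ : B) : A) = _
    rw [← MulMemClass.coe_mul, ← map_mul]
    by_cases h : j = l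
    · subst h
      rw [Matrix.single_mul_single_same, one_mul, if_pos rfl]
    · rw [Matrix.single_mul_single_of_ne (h := h), if_neg h, map_zero]
      rfl
  have hsum : ∑ i, e i i = 1 := by
    have h1 : (∑ i, Matrix.single i i (1 : F))
        = (1 : Matrix (Fin k) (Fin k) F) := by
      ext a b
      rw [Matrix.sum_apply]
      by_cases h : a = b
      · subst h
        rw [Matrix.one_apply_eq, Finset.sum_eq_single a]
        · simp [Matrix.single]
        · intro c _ hc
          simp only [Matrix.single, Matrix.of_apply]
          rw [if_neg (fun hh => hc hh.1)]
        · intro h; exact absurd (Finset.mem_univ a) h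
      · rw [Matrix.one_apply_ne h]
        refine Finset.sum_eq_zero fun c _ => ?_
        simp only [Matrix.single, Matrix.of_apply]
        rw [if_neg]
        rintro ⟨h1, h2⟩
        exact h (h1.symm.trans h2)
    calc (∑ i, e i i) = ((ψ (∑ i, Matrix.single i i (1 : F)) : B) : A) := by
          rw [map_sum]; push_cast; rfl
      _ = 1 := by rw [h1, map_one]; rfl
  have hdiag : ∀ i j : Fin k, (∑ l, e l i * e j l) = if i = j then (1 : A) else 0 := by
    intro i j
    by_cases h : i = j
    · subst h
      rw [if_pos rfl, ← hsum]
      refine Finset.sum_congr rfl fun l _ => ?_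
      rw [hee, if_pos rfl]
    · rw [if_neg h]
      refine Finset.sum_eq_zero fun l _ => ?_
      rw [hee, if_neg h]
  -- every element of B is an F-combination of the e i j
  have hBspan : ∀ b ∈ B, ∃ M : Matrix (Fin k) (Fin k) F,
      b = ∑ i, ∑ j, M i j • e i j := by
    intro b hb
    refine ⟨φ ⟨b, hb⟩, ?_⟩
    calc b = ((ψ (φ ⟨b, hb⟩) : B) : A) := by simp [ψ]
      _ = ((ψ (∑ i, ∑ j, Matrix.single i j (φ ⟨b, hb⟩ i j)) : B) : A) := by
          rw [← Matrix.matrix_eq_sum_single]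
      _ = ∑ i, ∑ j, (φ ⟨b, hb⟩) i j • e i j := by
          rw [map_sum]
          push_cast
          refine Finset.sum_congr rfl fun i _ => ?_
          rw [map_sum]
          push_cast
          refine Finset.sum_congr rfl fun j _ => ?_
          rw [show Matrix.single i j (φ ⟨b, hb⟩ i j)
              = (φ ⟨b, hb⟩ i j) • Matrix.single i j (1 : F) by simp,
            map_smul]
          rfl
  -- an element commuting with all matrix units lies in the centralizer
  have hmem : ∀ x : A, (∀ p q, e p q * x = x * e p q) → x ∈ C := by
    intro x hx
    rw [hC, Subalgebra.mem_centralizer_iff]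
    intro b hb
    obtain ⟨M, rfl⟩ := hBspan b hb
    rw [Finset.sum_mul, Finset.mul_sum]
    refine Finset.sum_congr rfl fun i _ => ?_
    rw [Finset.sum_mul, Finset.mul_sum]
    refine Finset.sum_congr rfl fun j _ => ?_
    rw [smul_mul_assoc, mul_smul_comm, hx]
  -- elements of the centralizer commute with the matrix units
  have hcomm : ∀ (c : C) (i j : Fin k), (c : A) * e i j = e i j * (c : A) := by
    intro c i j
    exact (Subalgebra.mem_centralizer_iff F |>.1 c.2 (e i j) (heB i j)).symm
  -- one-sided products with the entry sums
  have hL : ∀ (p q i j : Fin k) (a : A),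
      e p q * (∑ l, e l i * a * e j l) = e p i * a * e j q := by
    intro p q i j a
    rw [Finset.mul_sum, Finset.sum_eq_single q]
    · rw [← mul_assoc, ← mul_assoc, hee, if_pos rfl]
    · intro l _ hl
      rw [← mul_assoc, ← mul_assoc, hee, if_neg (fun h => hl h.symm), zero_mul, zero_mul]
    · intro h; exact absurd (Finset.mem_univ q) h
  have hR : ∀ (p q i j : Fin k) (a : A),
      (∑ l, e l i * a * e j l) * e p q = e p i * a * e j q := by
    intro p q i j a
    rw [Finset.sum_mul, Finset.sum_eq_single p]
    · rw [mul_assoc, mul_assoc, hee, if_pos rfl, ← mul_assoc]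
    · intro l _ hl
      rw [mul_assoc, mul_assoc, hee, if_neg hl, mul_zero, mul_zero]
    · intro h; exact absurd (Finset.mem_univ p) h
  -- the entries of the image matrix lie in the centralizer
  have hkey : ∀ (a : A) (i j : Fin k), (∑ l, e l i * a * e j l) ∈ C := by
    intro a i j
    apply hmem
    intro p q
    rw [hL, hR]
  have hEnt : ∀ (c : C) (p q i j l : Fin k),
      e l i * ((c : A) * e p q) * e j l
        = if i = p then (if q = j then (c : A) * e l l else 0) else 0 := by
    intro c p q i j l
    rw [← mul_assoc (e l i), ← hcomm, mul_assoc ((c : A)) (e l i) (e p q), hee]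
    by_cases h1 : i = p
    · rw [if_pos h1, if_pos h1, mul_assoc, hee]
      by_cases h2 : q = j
      · rw [if_pos h2, if_pos h2]
      · rw [if_neg h2, if_neg h2, mul_zero]
    · rw [if_neg h1, if_neg h1, mul_zero, zero_mul]
  let T : A → Matrix (Fin k) (Fin k) C := fun a i j => ⟨∑ l, e l i * a * e j l, hkey a i j⟩
  let S : Matrix (Fin k) (Fin k) C → A := fun M => ∑ i, ∑ j, ((M i j : A)) * e i j
  have hTS : ∀ M, T (S M) = M := by
    intro M
    ext i j
    show (∑ l, e l i * (∑ p, ∑ q, ((M p q : A)) * e p q) * e j l) = (M i j : A)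
    have h3 : ∀ l, e l i * (∑ p, ∑ q, ((M p q : A)) * e p q) * e j l
        = (M i j : A) * e l l := by
      intro l
      rw [Finset.mul_sum, Finset.sum_mul, Finset.sum_eq_single i]
      · rw [Finset.mul_sum, Finset.sum_mul, Finset.sum_eq_single j]
        · rw [hEnt, if_pos rfl, if_pos rfl]
        · intro q _ hq
          rw [hEnt, if_pos rfl, if_neg hq]
        · intro h; exact absurd (Finset.mem_univ j) h
      · intro p _ hp
        rw [Finset.mul_sum, Finset.sum_mul]
        refine Finset.sum_eq_zero fun q _ => ?_
        rw [hEnt, if_neg (fun h => hp h.symm)]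
      · intro h; exact absurd (Finset.mem_univ i) h
    rw [Finset.sum_congr rfl fun l _ => h3 l, ← Finset.mul_sum, hsum, mul_one]
  have hST : ∀ a, S (T a) = a := by
    intro a
    show (∑ i, ∑ j, (∑ l, e l i * a * e j l) * e i j) = a
    calc (∑ i, ∑ j, (∑ l, e l i * a * e j l) * e i j)
        = ∑ i, ∑ j, e i i * a * e j j := by
          refine Finset.sum_congr rfl fun i _ => Finset.sum_congr rfl fun j _ => ?_
          rw [hR]
      _ = (∑ i, e i i) * a * (∑ j, e j j) := by
          rw [Finset.sum_mul, Finset.sum_mul]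
          refine Finset.sum_congr rfl fun i _ => ?_
          rw [Finset.mul_sum]
      _ = a := by rw [hsum, one_mul, mul_one]
  refine ⟨{ toFun := T, invFun := S, left_inv := hST, right_inv := hTS,
            map_mul' := ?_, map_add' := ?_, commutes' := ?_ }⟩
  · intro a b
    ext i j
    show (∑ l, e l i * (a * b) * e j l)
        = ((∑ x, (⟨∑ l, e l i * a * e x l, hkey a i x⟩ : C) *
            (⟨∑ l, e l x * b * e j l, hkey b x j⟩ : C) : C) : A)
    push_cast
    have h3 : ∀ x, (∑ l, e l i * a * e x l) * (∑ l, e l x * b * e j l)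
        = ∑ l, e l i * a * (e x x * b) * e j l := by
      intro x
      rw [Finset.mul_sum]
      refine Finset.sum_congr rfl fun l _ => ?_
      rw [← mul_assoc, ← mul_assoc, hR, mul_assoc (e l i * a)]
    rw [Finset.sum_congr rfl fun x _ => h3 x, Finset.sum_comm]
    refine Finset.sum_congr rfl fun l _ => ?_
    rw [← Finset.sum_mul, ← Finset.mul_sum, ← Finset.sum_mul, hsum, one_mul,
      mul_assoc (e l i) a b]
  · intro a b
    ext i j
    show (∑ l, e l i * (a + b) * e j l) = (∑ l, e l i * a * e j l) + (∑ l, e l i * b * e j l)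
    rw [← Finset.sum_add_distrib]
    refine Finset.sum_congr rfl fun l _ => ?_
    rw [mul_add, add_mul]
  · intro r
    ext i j
    show (∑ l, e l i * (algebraMap F A r) * e j l)
        = (((algebraMap F (Matrix (Fin k) (Fin k) C) r) i j : A))
    have h4 : ∀ l, e l i * (algebraMap F A r) * e j l
        = algebraMap F A r * (e l i * e j l) := by
      intro l
      rw [← Algebra.commutes r (e l i), mul_assoc]
    rw [Finset.sum_congr rfl fun l _ => h4 l, ← Finset.mul_sum, hdiag,
      Matrix.algebraMap_matrix_apply]
    by_cases h : i = j
    · rw [if_pos h, if_pos h, mul_one]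
      simp
    · rw [if_neg h, if_neg h, mul_zero]
      simp
end

section
/- Let p be an odd prime and F a subfield of ℚ(ζ_p) with [ℚ(ζ_p):F] even and [F:ℚ] odd. Then -1 is not a norm from ℚ(ζ_p) to F, i.e., there is no α ∈ ℚ(ζ_p)× with N_{ℚ(ζ_p)/F}(α) = -1. -/
open Complex in
/-- Product over a set stable under a fixed-point-free involution `g` such that
`f (g i) = conj (f i)` is a nonnegative real number. -/
lemma aux_prod_conj {ι : Type*} [DecidableEq ι] (f : ι → ℂ) (g : ι → ι)
    (hg : ∀ i, g (g i) = i) (hfix : ∀ i, g i ≠ i)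
    (hf : ∀ i, f (g i) = (starRingEnd ℂ) (f i)) :
    ∀ s : Finset ι, (∀ i ∈ s, g i ∈ s) → ∃ r : ℝ, 0 ≤ r ∧ ∏ i ∈ s, f i = (r : ℂ) := by
  intro s
  induction s using Finset.strongInduction with
  | _ s ih =>
    intro hs
    rcases s.eq_empty_or_nonempty with rfl | ⟨a, ha⟩
    · exact ⟨1, by norm_num⟩
    · have hga : g a ∈ s := hs a ha
      have hgane : g a ≠ a := hfix a
      have hga' : g a ∈ s.erase a := Finset.mem_erase.2 ⟨hgane, hga⟩
      set t := (s.erase a).erase (g a) with ht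
      have hts : t ⊂ s := by
        refine Finset.ssubset_of_subset_of_ssubset ?_ (Finset.erase_ssubset ha)
        exact Finset.erase_subset _ _
      have htstable : ∀ i ∈ t, g i ∈ t := by
        intro i hi
        have hi1 : i ≠ g a := (Finset.mem_erase.1 hi).1
        have hi2 : i ≠ a := (Finset.mem_erase.1 (Finset.mem_erase.1 hi).2).1
        have hi3 : i ∈ s := (Finset.mem_erase.1 (Finset.mem_erase.1 hi).2).2
        refine Finset.mem_erase.2 ⟨?_, Finset.mem_erase.2 ⟨?_, hs i hi3⟩⟩
        · intro h; apply hi2; rw [← hg i, h, hg]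
        · intro h; apply hi1; rw [← hg i, h]
      obtain ⟨r, hr, hprod⟩ := ih t hts htstable
      refine ⟨Complex.normSq (f a) * r, mul_nonneg (Complex.normSq_nonneg _) hr, ?_⟩
      have hsplit : ∏ i ∈ s, f i = f a * (f (g a) * ∏ i ∈ t, f i) := by
        rw [ht, Finset.mul_prod_erase _ _ hga', Finset.mul_prod_erase _ _ ha]
      rw [hsplit, hprod, hf a, ← mul_assoc, Complex.mul_conj]
      push_cast
      ring

/-- Norms from `ℚ(ζ_p)` (p an odd prime) down to `ℚ` are nonnegative, since the field is
totally complex. -/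
lemma aux_norm_nonneg (p : ℕ+) (hp : (p : ℕ).Prime) (hodd : (p : ℕ) ≠ 2)
    (x : CyclotomicField p ℚ) : 0 ≤ Algebra.norm ℚ x := by
  haveI : Fact (p : ℕ).Prime := ⟨hp⟩
  haveI : NeZero (p : ℕ) := ⟨p.ne_zero⟩
  haveI : IsCyclotomicExtension {(p : ℕ)} ℚ (CyclotomicField p ℚ) :=
    CyclotomicField.isCyclotomicExtension _ _
  let K := CyclotomicField p ℚ
  haveI : FiniteDimensional ℚ K := IsCyclotomicExtension.finiteDimensional {(p : ℕ)} ℚ K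
  classical
  have hnorm := Algebra.norm_eq_prod_embeddings ℚ ℂ x
  -- the conjugation involution on embeddings
  let c : ℂ →ₐ[ℚ] ℂ := (AlgEquiv.restrictScalars ℚ Complex.conjAe).toAlgHom
  let g : (K →ₐ[ℚ] ℂ) → (K →ₐ[ℚ] ℂ) := fun σ => c.comp σ
  have hg : ∀ σ, g (g σ) = σ := by
    intro σ; ext y; simp [g, c]
  have hfix : ∀ σ, g σ ≠ σ := by
    intro σ h
    -- σ ζ is a primitive p-th root of unity in ℂ, hence not real
    have hζ := IsCyclotomicExtension.zeta_spec p ℚ K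
    have hζ' : IsPrimitiveRoot (σ (IsCyclotomicExtension.zeta p ℚ K)) (p : ℕ) :=
      hζ.map_of_injective σ.injective
    set z := σ (IsCyclotomicExtension.zeta p ℚ K) with hz
    have hconj : (starRingEnd ℂ) z = z := by
      have := congrArg (fun τ : K →ₐ[ℚ] ℂ => τ (IsCyclotomicExtension.zeta p ℚ K)) h
      simpa [g, c, Complex.conjAe] using this
    have him : z.im = 0 := Complex.conj_eq_iff_im.1 hconj
    have hre : z = (z.re : ℂ) := by
      exact Complex.ext rfl (by simp [him])
    have hp1 : z ^ (p : ℕ) = 1 := hζ'.pow_eq_one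
    have hre1 : (z.re : ℝ) ^ (p : ℕ) = 1 := by
      have : ((z.re : ℂ)) ^ (p : ℕ) = 1 := by rw [← hre]; exact hp1
      exact_mod_cast this
    have hpodd : Odd (p : ℕ) := hp.odd_of_ne_two hodd
    have hzre : z.re = 1 := by
      rcases pow_eq_one_iff_cases.1 hre1 with h0 | h1 | ⟨h2, h3⟩
      · exact absurd h0 hp.pos.ne'
      · exact h1
      · exact absurd h3 (Nat.not_even_iff_odd.2 hpodd)
    have hz1 : z = 1 := by rw [hre, hzre]; norm_num
    have : (p : ℕ) ∣ 1 := hζ'.dvd_of_pow_eq_one 1 (by rw [hz1]; norm_num)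
    exact absurd (Nat.le_of_dvd one_pos this) (not_le.2 hp.one_lt)
  have hf : ∀ σ : K →ₐ[ℚ] ℂ, (g σ) x = (starRingEnd ℂ) (σ x) := fun σ => rfl
  obtain ⟨r, hr, hprod⟩ := aux_prod_conj (fun σ : K →ₐ[ℚ] ℂ => σ x) g hg hfix hf
    Finset.univ (fun i _ => Finset.mem_univ _)
  have hcast : ((Algebra.norm ℚ x : ℝ) : ℂ) = (r : ℂ) := by
    rw [← hprod, ← hnorm]
    simp [Complex.ofReal_ratCast]
  have : ((Algebra.norm ℚ x : ℝ)) = r := Complex.ofReal_inj.1 hcast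
  have h0 : (0 : ℝ) ≤ (Algebra.norm ℚ x : ℝ) := this ▸ hr
  exact_mod_cast h0

/-- Let `p` be an odd prime and `F` a subfield of `ℚ(ζ_p)` with `[ℚ(ζ_p):F]` even and
`[F:ℚ]` odd.  Then `-1` is not a norm from `ℚ(ζ_p)` to `F`. -/
theorem stmt6 (p : ℕ+) (hp : (p : ℕ).Prime) (hodd : (p : ℕ) ≠ 2)
    (F : IntermediateField ℚ (CyclotomicField p ℚ))
    (heven : Even (Module.finrank F (CyclotomicField p ℚ)))
    (hoddF : Odd (Module.finrank ℚ F)) :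
    ¬ ∃ α : CyclotomicField p ℚ, α ≠ 0 ∧ Algebra.norm F α = -1 := by
  haveI : Fact (p : ℕ).Prime := ⟨hp⟩
  haveI : NeZero (p : ℕ) := ⟨p.ne_zero⟩
  haveI : IsCyclotomicExtension {(p : ℕ)} ℚ (CyclotomicField p ℚ) :=
    CyclotomicField.isCyclotomicExtension _ _
  haveI : FiniteDimensional ℚ (CyclotomicField p ℚ) :=
    IsCyclotomicExtension.finiteDimensional {(p : ℕ)} ℚ (CyclotomicField p ℚ)
  rintro ⟨α, hα0, hα⟩
  have htrans : Algebra.norm ℚ ((Algebra.norm F α : F)) = Algebra.norm ℚ α :=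
    Algebra.norm_norm (R := ℚ) (S := F) (a := α)
  rw [hα] at htrans
  have hneg : Algebra.norm ℚ ((-1 : F)) = -1 := by
    have : (-1 : F) = algebraMap ℚ F (-1) := by norm_num
    rw [this, Algebra.norm_algebraMap]
    exact hoddF.neg_one_pow
  rw [hneg] at htrans
  have := aux_norm_nonneg p hp hodd α
  rw [← htrans] at this
  norm_num at this
end

section
/- Let p be a prime with p ≡ 1 (mod 4) and F a subfield of ℚ(ζ_p) with [ℚ(ζ_p):F] even. Then p is a norm from ℚ(ζ_p) to F; in fact √p ∈ ℚ(ζ_p) and any even power p^{2m} lies in N_{ℚ(ζ_p)/F}(ℚ(ζ_p)×). -/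
/-- Let `p ≡ 1 (mod 4)` be a prime and `F` a subfield of `ℚ(ζ_p)` with `[ℚ(ζ_p):F]` even.
Then `√p ∈ ℚ(ζ_p)`, `p` is a norm from `ℚ(ζ_p)` to `F`, and every even power `p^(2m)`
is a norm from `ℚ(ζ_p)` to `F`. -/
theorem stmt7 (p : ℕ+) (hp : (p : ℕ).Prime) (hp4 : (p : ℕ) % 4 = 1)
    (F : IntermediateField ℚ (CyclotomicField p ℚ))
    (heven : Even (Module.finrank F (CyclotomicField p ℚ))) :
    (∃ s : CyclotomicField p ℚ, s ^ 2 = (p : CyclotomicField p ℚ)) ∧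
    (∃ α : CyclotomicField p ℚ, Algebra.norm F α = ((p : ℕ) : F)) ∧
    (∀ m : ℕ, ∃ α : CyclotomicField p ℚ, Algebra.norm F α = ((p : ℕ) : F) ^ (2 * m)) := by
  classical
  set L := CyclotomicField p ℚ with hLdef
  haveI hfact : Fact (p : ℕ).Prime := ⟨hp⟩
  have hpne2 : (p : ℕ) ≠ 2 := by intro h; rw [h] at hp4; norm_num at hp4
  have hp2 : p ≠ 2 := by intro h; apply hpne2; rw [h]; rfl
  haveI : NeZero ((p : ℕ)) := ⟨hp.pos.ne'⟩
  haveI : IsCyclotomicExtension {(p : ℕ)} ℚ L :=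
    CyclotomicField.isCyclotomicExtension _ _
  haveI : FiniteDimensional ℚ L := IsCyclotomicExtension.finiteDimensional {(p : ℕ)} ℚ L
  haveI : IsGalois ℚ L := IsCyclotomicExtension.isGalois {(p : ℕ)} ℚ L
  have hζ := IsCyclotomicExtension.zeta_spec p ℚ L
  set ζ := IsCyclotomicExtension.zeta p ℚ L with hζdef
  -- Part 1 : the Gauss sum
  have part1 : ∃ s : L, s ^ 2 = (p : L) := by
    haveI : NeZero ((p : ℕ)) := ⟨hp.pos.ne'⟩
    set χ : MulChar (ZMod (p : ℕ)) L :=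
      (quadraticChar (ZMod (p : ℕ))).ringHomComp (Int.castRingHom L) with hχdef
    have hch : ringChar (ZMod (p : ℕ)) ≠ 2 := by
      rw [ZMod.ringChar_zmod_n]; exact hpne2
    have hχ1 : χ ≠ 1 :=
      (MulChar.ringHomComp_ne_one_iff ((Int.castRingHom L).injective_int)).mpr
        (quadraticChar_ne_one hch)
    have hχ2 : χ.IsQuadratic :=
      (quadraticChar_isQuadratic (ZMod (p : ℕ))).comp _
    set ψ : AddChar (ZMod (p : ℕ)) L := AddChar.zmodChar (p : ℕ) hζ.pow_eq_one with hψdef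
    have hψ : ψ.IsPrimitive :=
      AddChar.zmodChar_primitive_of_primitive_root (p : ℕ) hζ
    refine ⟨gaussSum χ ψ, ?_⟩
    rw [gaussSum_sq hχ1 hχ2 hψ]
    have hχm1 : χ (-1) = 1 := by
      rw [hχdef, MulChar.ringHomComp_apply, quadraticChar_neg_one hch,
        ZMod.card, ZMod.χ₄_nat_one_mod_four hp4]
      simp
    rw [hχm1, one_mul, ZMod.card]
  -- Part 2 : p is a norm from L to F
  have part2 : ∃ α : L, Algebra.norm F α = ((p : ℕ) : F) := by
    have hirr : Irreducible (Polynomial.cyclotomic (p : ℕ) ℚ) :=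
      Polynomial.cyclotomic.irreducible_rat p.pos
    have hnorm : Algebra.norm ℚ (ζ - 1) = ((p : ℕ) : ℚ) := by
      have := hζ.sub_one_norm_isPrimePow (n := (p : ℕ)) hp.isPrimePow hirr hpne2
      rw [this, hp.minFac_eq]
    set G := (L ≃ₐ[ℚ] L) with hGdef
    set f : (L ≃ₐ[F] L) →* G :=
      { toFun := fun h => h.restrictScalars ℚ
        map_one' := rfl
        map_mul' := fun a b => rfl } with hfdef
    have hf : Function.Injective f := AlgEquiv.restrictScalars_injective ℚ
    set H' : Subgroup G := f.range with hH'def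
    haveI : Fintype (G ⧸ H') := Fintype.ofFinite _
    -- the bijection (G ⧸ H') × H' ≃ G, (q, h) ↦ h * q.out⁻¹
    set e : (G ⧸ H') × H' ≃ G :=
      { toFun := fun z => (z.2 : G) * (Quotient.out z.1)⁻¹
        invFun := fun g =>
          (QuotientGroup.mk g⁻¹,
            ⟨g * (Quotient.out (QuotientGroup.mk g⁻¹ : G ⧸ H')), by
              have h1 : (QuotientGroup.mk
                  (Quotient.out (QuotientGroup.mk g⁻¹ : G ⧸ H')) : G ⧸ H') =
                  QuotientGroup.mk g⁻¹ := QuotientGroup.out_eq' _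
              have h2 := QuotientGroup.eq.mp h1
              have h3 : (g * (Quotient.out (QuotientGroup.mk g⁻¹ : G ⧸ H')))⁻¹ ∈ H' := by
                rw [mul_inv_rev]
                simpa using h2
              exact (Subgroup.inv_mem_iff H').mp h3⟩)
        left_inv := by
          rintro ⟨q, h⟩
          have hq : (QuotientGroup.mk (((h : G) * (Quotient.out q)⁻¹)⁻¹) : G ⧸ H') = q := by
            rw [mul_inv_rev, inv_inv, QuotientGroup.mk_mul_of_mem _ (H'.inv_mem h.2),
              QuotientGroup.out_eq']
          refine Prod.ext hq (Subtype.ext ?_)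
          simp only [hq]
          group
        right_inv := fun g => by simp } with hedef
    -- the element whose norm is p
    set α : L := ∏ q : G ⧸ H', ((Quotient.out q)⁻¹ : G) (ζ - 1) with hαdef
    have key : ((p : ℕ) : L) = ∏ g : G, g (ζ - 1) := by
      rw [← Algebra.norm_eq_prod_automorphisms, hnorm, map_natCast]
    have key2 : ((p : ℕ) : L) = ∏ h : (L ≃ₐ[F] L), h α := by
      rw [key, ← Fintype.prod_equiv e (fun z => (e z) (ζ - 1)) (fun g => g (ζ - 1))
        (fun z => rfl)]
      have step1 : ∏ z : (G ⧸ H') × H', (e z) (ζ - 1)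
          = ∏ h : H', (h : G) α := by
        rw [Fintype.prod_prod_type]
        rw [Finset.prod_comm]
        refine Finset.prod_congr rfl fun h _ => ?_
        rw [hαdef, map_prod]
        rfl
      rw [step1]
      refine Fintype.prod_equiv
        (MonoidHom.ofInjective hf).toEquiv.symm (fun h => (h : G) α)
        (fun h => h α) (fun x => ?_)
      have h1 : f ((MonoidHom.ofInjective hf).symm x) = (x : G) :=
        MonoidHom.apply_ofInjective_symm hf x
      exact (congrArg (fun g : G => g α) h1).symm
    have key3 : algebraMap F L (Algebra.norm F α) = algebraMap F L ((p : ℕ) : F) := by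
      rw [Algebra.norm_eq_prod_automorphisms, ← key2, map_natCast]
    exact ⟨α, (algebraMap F L).injective key3⟩
  refine ⟨part1, part2, ?_⟩
  obtain ⟨α₀, hα₀⟩ := part2
  intro m
  exact ⟨α₀ ^ (2 * m), by rw [map_pow, hα₀]⟩
end

section
/- Let p ≡ 1 (mod 4) be a prime, p - 1 = 2^{n-1} t with t odd and n ≥ 3, r a primitive root mod p, and k, q integers with r^t ≡ -kq (mod p). Let P be the extraspecial group of order p³ and exponent p with generators x,y,z as above. Then the map θ: P → P defined by x ↦ x^{r^t}, y ↦ z^k, z ↦ y^q extends to an automorphism of P of order 2^n. -/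
@[ext]
structure Heis (p : ℕ) where
  a : ZMod p
  b : ZMod p
  c : ZMod p

namespace Heis

variable {p : ℕ}

instance : Mul (Heis p) :=
  ⟨fun h h' => ⟨h.a + h'.a, h.b + h'.b, h.c + h'.c + h.b * h'.a⟩⟩

instance : One (Heis p) := ⟨⟨0, 0, 0⟩⟩

instance : Inv (Heis p) := ⟨fun h => ⟨-h.a, -h.b, -h.c + h.b * h.a⟩⟩

@[simp] lemma mul_a (h h' : Heis p) : (h * h').a = h.a + h'.a := rfl
@[simp] lemma mul_b (h h' : Heis p) : (h * h').b = h.b + h'.b := rfl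
@[simp] lemma mul_c (h h' : Heis p) : (h * h').c = h.c + h'.c + h.b * h'.a := rfl
@[simp] lemma one_a : (1 : Heis p).a = 0 := rfl
@[simp] lemma one_b : (1 : Heis p).b = 0 := rfl
@[simp] lemma one_c : (1 : Heis p).c = 0 := rfl
@[simp] lemma inv_a (h : Heis p) : (h⁻¹).a = -h.a := rfl
@[simp] lemma inv_b (h : Heis p) : (h⁻¹).b = -h.b := rfl
@[simp] lemma inv_c (h : Heis p) : (h⁻¹).c = -h.c + h.b * h.a := rfl

instance : Group (Heis p) where
  mul_assoc h₁ h₂ h₃ := by ext <;> simp <;> ring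
  one_mul h := by ext <;> simp
  mul_one h := by ext <;> simp
  inv_mul_cancel h := by ext <;> simp

def equivProd : Heis p ≃ (ZMod p × ZMod p × ZMod p) where
  toFun h := (h.a, h.b, h.c)
  invFun u := ⟨u.1, u.2.1, u.2.2⟩
  left_inv _ := rfl
  right_inv _ := rfl

instance [NeZero p] : Finite (Heis p) := Finite.of_equiv _ (equivProd (p := p)).symm

lemma card (p : ℕ) : Nat.card (Heis p) = p ^ 3 := by
  rw [Nat.card_congr (equivProd (p := p)), Nat.card_prod, Nat.card_prod, Nat.card_zmod]
  ring

end Heis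

/-- Let `p ≡ 1 (mod 4)` be a prime with `p - 1 = 2^(n-1) t`, `t` odd, `n ≥ 3`, `r` a
primitive root mod `p`, and `k, q` integers with `r^t ≡ -kq (mod p)`.  In the extraspecial
group `P` of order `p³` and exponent `p` with generators `x, y, z`, the assignment
`x ↦ x^(r^t)`, `y ↦ z^k`, `z ↦ y^q` extends to an automorphism `θ` of `P` of order `2^n`. -/
theorem stmt9 (p n t r : ℕ) (k q : ℤ) (hp : p.Prime) (hp4 : p % 4 = 1)
    (hpt : p - 1 = 2 ^ (n - 1) * t) (ht : Odd t) (hn : 3 ≤ n)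
    (hr : orderOf (r : ZMod p) = p - 1)
    (hkq : ((r : ℤ) ^ t + k * q) % (p : ℤ) = 0)
    (P : Type*) [Group P] [Finite P] (x y z : P)
    (hgen : Subgroup.closure {x, y, z} = ⊤) (hcard : Nat.card P = p ^ 3)
    (hx : x ^ p = 1) (hy : y ^ p = 1) (hz : z ^ p = 1)
    (hxy : x * y = y * x) (hyz : y * z = z * y * x) (hxz : x * z = z * x) :
    ∃ θ : MulAut P, θ x = x ^ (r ^ t) ∧ θ y = z ^ k ∧ θ z = y ^ q ∧
      orderOf θ = 2 ^ n := by
  haveI : Fact p.Prime := ⟨hp⟩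
  have hp5 : 5 ≤ p := by
    have := hp.two_le
    omega
  haveI : Fact (2 < p) := ⟨by omega⟩
  haveI : Fact (1 < p) := ⟨by omega⟩
  -- commuting facts
  have cxy : Commute x y := hxy
  have cxz : Commute x z := hxz
  -- basic reduction of exponents modulo p
  have hvaln : ∀ g : P, g ^ p = 1 → ∀ m : ℕ, g ^ m = g ^ ((m : ZMod p)).val := by
    intro g hg m
    conv_lhs => rw [← Nat.div_add_mod m p]
    rw [pow_add, pow_mul, hg, one_pow, one_mul, ZMod.val_natCast]
  have hvalz : ∀ g : P, g ^ p = 1 → ∀ m : ℤ, g ^ m = g ^ ((m : ZMod p)).val := by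
    intro g hg m
    have hcast : ((m - (((m : ZMod p)).val : ℤ) : ℤ) : ZMod p) = 0 := by
      push_cast
      rw [ZMod.natCast_val, ZMod.cast_id]
      ring
    obtain ⟨d, hd⟩ := (ZMod.intCast_zmod_eq_zero_iff_dvd _ _).mp hcast
    have hm : m = (((m : ZMod p)).val : ℤ) + p * d := by linarith
    conv_lhs => rw [hm]
    rw [zpow_add, zpow_natCast, zpow_mul, zpow_natCast, hg, one_zpow, mul_one]
  -- the key commutation relation at the level of powers
  have h1n : ∀ m : ℕ, y * z ^ m = z ^ m * (y * x ^ m) := by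
    intro m
    induction m with
    | zero => simp
    | succ m ih =>
      calc y * z ^ (m + 1) = (y * z ^ m) * z := by rw [pow_succ, mul_assoc]
        _ = z ^ m * (y * (x ^ m * z)) := by rw [ih]; group
        _ = z ^ m * (y * (z * x ^ m)) := by rw [(cxz.pow_left m).eq]
        _ = z ^ m * ((y * z) * x ^ m) := by group
        _ = z ^ m * ((z * y * x) * x ^ m) := by rw [hyz]
        _ = z ^ (m + 1) * (y * x ^ (m + 1)) := by rw [pow_succ, pow_succ]; group
  have hmn : ∀ m m' : ℕ, y ^ m * z ^ m' = z ^ m' * y ^ m * x ^ (m * m') := by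
    intro m m'
    induction m with
    | zero => simp
    | succ m ih =>
      calc y ^ (m + 1) * z ^ m' = y ^ m * (y * z ^ m') := by rw [pow_succ']; group
        _ = y ^ m * (z ^ m' * (y * x ^ m')) := by rw [h1n]
        _ = (y ^ m * z ^ m') * (y * x ^ m') := by group
        _ = z ^ m' * y ^ m * x ^ (m * m') * (y * x ^ m') := by rw [ih]
        _ = z ^ m' * y ^ m * (x ^ (m * m') * y) * x ^ m' := by group
        _ = z ^ m' * y ^ m * (y * x ^ (m * m')) * x ^ m' := by
              rw [(cxy.pow_left (m * m')).eq]
        _ = z ^ m' * y ^ (m + 1) * x ^ ((m + 1) * m') := by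
              rw [pow_succ]
              have : (m + 1) * m' = m * m' + m' := by ring
              rw [this, pow_add]
              group
  -- product formula in normal form
  have hprod : ∀ A B C A' B' C' : ℕ,
      (z ^ A * y ^ B * x ^ C) * (z ^ A' * y ^ B' * x ^ C') =
        z ^ (A + A') * y ^ (B + B') * x ^ (C + C' + B * A') := by
    intro A B C A' B' C'
    have hxc : ∀ m m' : ℕ, x ^ m * z ^ m' = z ^ m' * x ^ m :=
      fun m m' => (cxz.pow_pow m m').eq
    have hxcy : ∀ m m' : ℕ, x ^ m * y ^ m' = y ^ m' * x ^ m :=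
      fun m m' => (cxy.pow_pow m m').eq
    calc (z ^ A * y ^ B * x ^ C) * (z ^ A' * y ^ B' * x ^ C')
        = z ^ A * y ^ B * (x ^ C * z ^ A') * y ^ B' * x ^ C' := by group
      _ = z ^ A * (y ^ B * z ^ A') * (x ^ C * y ^ B') * x ^ C' := by rw [hxc]; group
      _ = z ^ A * (y ^ B * z ^ A') * (y ^ B' * x ^ C) * x ^ C' := by rw [hxcy]
      _ = z ^ A * (z ^ A' * y ^ B * x ^ (B * A')) * (y ^ B' * x ^ C) * x ^ C' := by
            rw [hmn]
      _ = z ^ (A + A') * y ^ B * (x ^ (B * A') * y ^ B') * (x ^ C * x ^ C') := by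
            rw [pow_add]; group
      _ = z ^ (A + A') * y ^ B * (y ^ B' * x ^ (B * A')) * (x ^ C * x ^ C') := by
            rw [hxcy]
      _ = z ^ (A + A') * y ^ (B + B') * x ^ (C + C' + B * A') := by
            rw [pow_add, pow_add, pow_add, pow_add]; group
  -- reduction: combining powers with ZMod.val exponents
  have hval2 : ∀ g : P, g ^ p = 1 → ∀ (N : ℕ) (u : ZMod p), (N : ZMod p) = u →
      g ^ N = g ^ u.val := by
    intro g hg N u hu
    rw [hvaln g hg N, hu]
  -- the isomorphism φ : Heis p → P
  set φfun : Heis p → P := fun h => z ^ h.a.val * y ^ h.b.val * x ^ h.c.val with hφfun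
  have hφmul : ∀ h h' : Heis p, φfun (h * h') = φfun h * φfun h' := by
    intro h h'
    rw [hφfun]
    simp only [Heis.mul_a, Heis.mul_b, Heis.mul_c]
    rw [hprod]
    have ez : z ^ (h.a.val + h'.a.val) = z ^ ((h.a + h'.a).val) := by
      apply hval2 z hz
      push_cast [ZMod.natCast_val, ZMod.cast_id]
      ring
    have ey : y ^ (h.b.val + h'.b.val) = y ^ ((h.b + h'.b).val) := by
      apply hval2 y hy
      push_cast [ZMod.natCast_val, ZMod.cast_id]
      ring
    have ex : x ^ (h.c.val + h'.c.val + h.b.val * h'.a.val) =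
        x ^ ((h.c + h'.c + h.b * h'.a).val) := by
      apply hval2 x hx
      push_cast [ZMod.natCast_val, ZMod.cast_id]
      ring
    rw [← ez, ← ey, ← ex]
  set φ : Heis p →* P := MonoidHom.mk' φfun hφmul with hφ
  have hφx : φ ⟨0, 0, 1⟩ = x := by
    show φfun _ = x
    rw [hφfun]
    simp [ZMod.val_one]
  have hφy : φ ⟨0, 1, 0⟩ = y := by
    show φfun _ = y
    rw [hφfun]
    simp [ZMod.val_one]
  have hφz : φ ⟨1, 0, 0⟩ = z := by
    show φfun _ = z
    rw [hφfun]
    simp [ZMod.val_one]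
  have hsurj : Function.Surjective φ := by
    have hle : Subgroup.closure {x, y, z} ≤ φ.range := by
      apply (Subgroup.closure_le _).mpr
      rintro g hg
      simp only [Set.mem_insert_iff, Set.mem_singleton_iff] at hg
      rcases hg with rfl | rfl | rfl
      · exact ⟨⟨0, 0, 1⟩, hφx⟩
      · exact ⟨⟨0, 1, 0⟩, hφy⟩
      · exact ⟨⟨1, 0, 0⟩, hφz⟩
    intro g
    have : g ∈ φ.range := hle (hgen ▸ Subgroup.mem_top g)
    exact this
  have hbij : Function.Bijective φ :=
    (Nat.bijective_iff_surjective_and_card φ).mpr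
      ⟨hsurj, by rw [Heis.card, hcard]⟩
  set e : Heis p ≃* P := MulEquiv.ofBijective φ hbij with he
  have he_apply : ∀ h : Heis p, e h = φ h := fun h => rfl
  -- arithmetic setup in ZMod p
  set K : ZMod p := (k : ZMod p) with hK
  set Q : ZMod p := (q : ZMod p) with hQ
  set R : ZMod p := (r : ZMod p) ^ t with hR
  have hKQ : K * Q = -R := by
    have hdvd : (p : ℤ) ∣ ((r : ℤ) ^ t + k * q) := Int.dvd_of_emod_eq_zero hkq
    have : (((r : ℤ) ^ t + k * q : ℤ) : ZMod p) = 0 :=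
      (ZMod.intCast_zmod_eq_zero_iff_dvd _ _).mpr hdvd
    push_cast at this
    rw [hK, hQ, hR]
    linear_combination this
  have hRunit : R ≠ 0 := by
    have hr1 : (r : ZMod p) ^ (p - 1) = 1 := by rw [← hr]; exact pow_orderOf_eq_one _
    have hrne : (r : ZMod p) ≠ 0 := by
      intro h0
      rw [h0] at hr1
      rw [zero_pow (by omega)] at hr1
      exact zero_ne_one hr1
    exact pow_ne_zero _ hrne
  have hKQne : K * Q ≠ 0 := by rw [hKQ]; simpa using hRunit
  have hKne : K ≠ 0 := fun h0 => hKQne (by rw [h0, zero_mul])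
  have hQne : Q ≠ 0 := fun h0 => hKQne (by rw [h0, mul_zero])
  -- the automorphism ψ of Heis p
  set ψfun : Heis p → Heis p :=
    fun h => ⟨K * h.b, Q * h.a, -(K * Q) * h.c + K * Q * h.a * h.b⟩ with hψfun
  have hψmul : ∀ h h' : Heis p, ψfun (h * h') = ψfun h * ψfun h' := by
    intro h h'
    rw [hψfun]
    ext <;> simp <;> ring
  set ψ : Heis p →* Heis p := MonoidHom.mk' ψfun hψmul with hψ
  have hψinj : Function.Injective ψ := by
    apply (injective_iff_map_eq_one ψ).mpr
    intro h hh
    have h1 : ψfun h = 1 := hh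
    rw [hψfun] at h1
    have ha : K * h.b = 0 := congrArg Heis.a h1
    have hb : Q * h.a = 0 := congrArg Heis.b h1
    have hc : -(K * Q) * h.c + K * Q * h.a * h.b = 0 := congrArg Heis.c h1
    have hb0 : h.b = 0 := by
      rcases mul_eq_zero.mp ha with h' | h'
      · exact absurd h' hKne
      · exact h'
    have ha0 : h.a = 0 := by
      rcases mul_eq_zero.mp hb with h' | h'
      · exact absurd h' hQne
      · exact h'
    have hc' : -(K * Q) * h.c = 0 := by
      rw [ha0, hb0] at hc
      linear_combination hc
    have hc0 : h.c = 0 := by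
      rcases mul_eq_zero.mp hc' with h' | h'
      · exact absurd (neg_eq_zero.mp h') hKQne
      · exact h'
    ext <;> simp [ha0, hb0, hc0]
  set ψe : MulAut (Heis p) := MulEquiv.ofBijective ψ (Finite.injective_iff_bijective.mp hψinj)
    with hψe
  have hψe_apply : ∀ h : Heis p, ψe h = ψfun h := fun h => rfl
  -- powers of ψe
  set S : ZMod p := K * Q with hS
  have hψ2 : ∀ h : Heis p, (ψe ^ 2) h = ⟨S * h.a, S * h.b, S ^ 2 * h.c⟩ := by
    intro h
    have : (ψe ^ 2) h = ψe (ψe h) := by rw [sq, MulAut.mul_apply]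
    rw [this, hψe_apply, hψe_apply, hψfun]
    ext <;> simp [hS] <;> ring
  have hpow2 : ∀ (m : ℕ) (h : Heis p),
      (ψe ^ (2 * m)) h = ⟨S ^ m * h.a, S ^ m * h.b, (S ^ m) ^ 2 * h.c⟩ := by
    intro m
    induction m with
    | zero => intro h; ext <;> simp
    | succ m ih =>
      intro h
      have h2 : 2 * (m + 1) = 2 * m + 2 := by ring
      rw [h2, pow_add, MulAut.mul_apply, hψ2 h, ih]
      ext <;> simp <;> ring
  -- number theory: S ^ (2 ^ (n - 2)) = -1
  have hM2 : 2 * (t * 2 ^ (n - 2)) = p - 1 := by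
    have h1 : n - 1 = (n - 2) + 1 := by omega
    rw [hpt, h1, pow_succ]
    ring
  have hu2 : ((r : ZMod p) ^ (t * 2 ^ (n - 2))) ^ 2 = 1 := by
    rw [← pow_mul, mul_comm (t * 2 ^ (n - 2)) 2, hM2, ← hr]
    exact pow_orderOf_eq_one _
  have hune : (r : ZMod p) ^ (t * 2 ^ (n - 2)) ≠ 1 := by
    intro h1
    have hdvd := orderOf_dvd_of_pow_eq_one h1
    rw [hr] at hdvd
    have htpos : 0 < t := ht.pos
    have hMpos : 0 < t * 2 ^ (n - 2) := Nat.mul_pos htpos (Nat.pow_pos (by norm_num))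
    have hle := Nat.le_of_dvd hMpos hdvd
    omega
  have hu : (r : ZMod p) ^ (t * 2 ^ (n - 2)) = -1 := by
    have hu2' : (r : ZMod p) ^ (t * 2 ^ (n - 2)) * (r : ZMod p) ^ (t * 2 ^ (n - 2)) = 1 := by
      rw [← pow_two]; exact hu2
    rcases mul_self_eq_one_iff.mp hu2' with h1 | h1
    · exact absurd h1 hune
    · exact h1
  have hShalf : S ^ (2 ^ (n - 2)) = -1 := by
    have heven : Even (2 ^ (n - 2)) := by
      have h1 : n - 2 = (n - 3) + 1 := by omega
      rw [h1, pow_succ]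
      exact even_two.mul_left _
    rw [hKQ, hR, heven.neg_pow, ← pow_mul, hu]
  have hS1 : S ^ (2 ^ (n - 1)) = 1 := by
    have h1 : n - 1 = (n - 2) + 1 := by omega
    rw [h1, pow_succ, pow_mul, hShalf, neg_one_sq]
  -- order of ψe
  have h2n : ψe ^ (2 ^ n) = 1 := by
    have e2 : 2 ^ n = 2 * 2 ^ (n - 1) := by
      have h1 : n = (n - 1) + 1 := by omega
      conv_lhs => rw [h1]
      rw [pow_succ]
      ring
    apply MulEquiv.ext
    intro h
    rw [e2, MulAut.one_apply, hpow2 (2 ^ (n - 1)) h]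
    apply Heis.ext <;> simp [hS1]
  have hne : ψe ^ (2 ^ (n - 1)) ≠ 1 := by
    intro h1
    have e2 : 2 ^ (n - 1) = 2 * 2 ^ (n - 2) := by
      have hh : n - 1 = (n - 2) + 1 := by omega
      rw [hh, pow_succ]
      ring
    have hc := congrArg (fun f : MulAut (Heis p) => f ⟨1, 0, 0⟩) h1
    simp only [MulAut.one_apply] at hc
    rw [e2, hpow2 (2 ^ (n - 2)) ⟨1, 0, 0⟩] at hc
    have ha := congrArg Heis.a hc
    simp only [mul_one] at ha
    rw [hShalf] at ha
    exact ZMod.neg_one_ne_one ha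
  have hord : orderOf ψe = 2 ^ n := by
    haveI : Fact (Nat.Prime 2) := ⟨Nat.prime_two⟩
    have hh : (n - 1) + 1 = n := by omega
    rw [← hh]
    exact orderOf_eq_prime_pow hne (by rw [hh]; exact h2n)
  -- the automorphism θ of P
  have hθ : ∀ h : Heis p, (MulAut.congr e) ψe (e h) = e (ψe h) := by
    intro h
    simp [MulAut.congr]
  refine ⟨(MulAut.congr e) ψe, ?_, ?_, ?_, ?_⟩
  · -- θ x = x ^ (r ^ t)
    have hex : e ⟨0, 0, 1⟩ = x := by rw [he_apply]; exact hφx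
    have hψx : ψe ⟨0, 0, 1⟩ = ⟨0, 0, R⟩ := by
      rw [hψe_apply, hψfun]
      ext <;> simp [hKQ]
    nth_rewrite 1 [← hex]
    rw [hθ, hψx, he_apply]
    show z ^ (0 : ZMod p).val * y ^ (0 : ZMod p).val * x ^ R.val = x ^ r ^ t
    rw [ZMod.val_zero, pow_zero, pow_zero, one_mul, one_mul]
    conv_rhs => rw [hvaln x hx (r ^ t)]
    have hcast : ((r ^ t : ℕ) : ZMod p) = R := by rw [hR]; push_cast; ring
    rw [hcast]
  · -- θ y = z ^ k
    have hey : e ⟨0, 1, 0⟩ = y := by rw [he_apply]; exact hφy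
    have hψy : ψe ⟨0, 1, 0⟩ = ⟨K, 0, 0⟩ := by
      rw [hψe_apply, hψfun]
      ext <;> simp
    rw [← hey, hθ, hψy, he_apply]
    show z ^ K.val * y ^ (0 : ZMod p).val * x ^ (0 : ZMod p).val = z ^ k
    rw [ZMod.val_zero, pow_zero, pow_zero, mul_one, mul_one, hvalz z hz k, hK]
  · -- θ z = y ^ q
    have hez : e ⟨1, 0, 0⟩ = z := by rw [he_apply]; exact hφz
    have hψz : ψe ⟨1, 0, 0⟩ = ⟨0, Q, 0⟩ := by
      rw [hψe_apply, hψfun]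
      ext <;> simp
    rw [← hez, hθ, hψz, he_apply]
    show z ^ (0 : ZMod p).val * y ^ Q.val * x ^ (0 : ZMod p).val = y ^ q
    rw [ZMod.val_zero, pow_zero, pow_zero, one_mul, mul_one, hvalz y hy q, hQ]
  · -- order
    rw [← hord]
    exact orderOf_injective (MulAut.congr e).toMonoidHom (MulAut.congr e).injective ψe
end
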